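/- Let G be a connected graph of order n with independence number α, where n ≥ 2α. Then G has a spanning tree T which is obtained from a subtree of G of order t ≤ 2α − 1 by attaching the remaining n − t vertices as pendent vertices to vertices of that subtree. -/

import Mathlib

open SimpleGraph Finset

namespace Stmt6Aux
variable {V : Type*}


lemma exists_cross' {G : SimpleGraph V} (D : Set V) :
    ∀ {v r : V}, G.Walk v r → r ∈ D → v ∉ D → ∃ w u : V, w ∉ D ∧ u ∈ D ∧ G.Adj w u := by
  intro v r p
  induction p with
  | nil => intro hr hv; exact absurd hr hv
  | @cons a b c hadj q ih =>
    intro hr hv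
    by_cases hb : b ∈ D
    · exact ⟨a, b, hv, hb, hadj⟩
    · exact ih hr hb

lemma grow [Fintype V] [DecidableEq V] {G : SimpleGraph V} (hG : G.Connected) :
    ∀ (k : ℕ) (S I : Finset V) (r : V) (par : V → V) (h : V → ℕ),
      (Finset.univ \ S).card ≤ k → r ∈ S → I ⊆ S →
      (∀ x ∈ I, ∀ y ∈ I, ¬ G.Adj x y) → S.card ≤ 2 * I.card - 1 →
      (∀ v ∈ S, v ≠ r → G.Adj v (par v) ∧ par v ∈ S ∧ h (par v) < h v) →
      ∃ (S' I' : Finset V) (par' : V → V) (h' : V → ℕ),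
        r ∈ S' ∧ I' ⊆ S' ∧ (∀ x ∈ I', ∀ y ∈ I', ¬ G.Adj x y) ∧
        S'.card ≤ 2 * I'.card - 1 ∧
        (∀ v ∈ S', v ≠ r → G.Adj v (par' v) ∧ par' v ∈ S' ∧ h' (par' v) < h' v) ∧
        (∀ v, v ∉ S' → ∃ u ∈ S', G.Adj v u) := by
  intro k
  induction k with
  | zero =>
    intro S I r par h hk hr hIS hI hcard hinv
    have hdom : ∀ v, v ∉ S → ∃ u ∈ S, G.Adj v u := by
      intro v hv
      exfalso
      have h0 : (Finset.univ \ S) = ∅ := Finset.card_eq_zero.mp (Nat.le_zero.mp hk)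
      have : v ∈ Finset.univ \ S := Finset.mem_sdiff.mpr ⟨Finset.mem_univ v, hv⟩
      simp [h0] at this
    exact ⟨S, I, par, h, hr, hIS, hI, hcard, hinv, hdom⟩
  | succ k ih =>
    intro S I r par h hk hr hIS hI hcard hinv
    by_cases hdom : ∀ v, v ∉ S → ∃ u ∈ S, G.Adj v u
    · exact ⟨S, I, par, h, hr, hIS, hI, hcard, hinv, hdom⟩
    push_neg at hdom
    obtain ⟨v, hvS, hvn⟩ := hdom
    set D : Set V := {x | x ∈ S ∨ ∃ s ∈ S, G.Adj x s} with hD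
    have hvD : v ∉ D := by
      rintro (h1 | ⟨s, hs, hadj⟩)
      · exact hvS h1
      · exact hvn s hs hadj
    have hrD : r ∈ D := Or.inl hr
    obtain ⟨w, u, hwD, huD, hwu⟩ :=
      exists_cross' D ((hG.preconnected v r).some) hrD hvD
    have hwS : w ∉ S := fun hw => hwD (Or.inl hw)
    have hwN : ∀ s ∈ S, ¬ G.Adj w s := fun s hs hadj => hwD (Or.inr ⟨s, hs, hadj⟩)
    have huS : u ∉ S := fun hu => hwN u hu hwu
    obtain ⟨s, hsS, hus⟩ : ∃ s ∈ S, G.Adj u s := by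
      rcases huD with h1 | h2
      · exact absurd h1 huS
      · exact h2
    have hwu_ne : w ≠ u := hwu.ne
    have hsw : s ≠ w := fun e => hwS (e ▸ hsS)
    have hsu : s ≠ u := fun e => huS (e ▸ hsS)
    set M := S.sup h with hM
    set S' : Finset V := insert u (insert w S) with hS'
    set I' : Finset V := insert w I with hI'
    set par' : V → V := Function.update (Function.update par u s) w u with hpar'
    set h' : V → ℕ := Function.update (Function.update h u (M + 1)) w (M + 2) with hh'
    have huS' : u ∉ insert w S := by
      simp only [Finset.mem_insert]
      rintro (e | e)
      · exact hwu_ne e.symm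
      · exact huS e
    have hcardS' : S'.card = S.card + 2 := by
      rw [hS', Finset.card_insert_of_notMem huS', Finset.card_insert_of_notMem hwS]
    have hwI : w ∉ I := fun hw => hwS (hIS hw)
    have hcardI' : I'.card = I.card + 1 := Finset.card_insert_of_notMem hwI
    have hSpos : 1 ≤ S.card := Finset.card_pos.mpr ⟨r, hr⟩
    have hIpos : 1 ≤ I.card := by omega
    -- evaluate updates
    have hpar'w : par' w = u := by rw [hpar']; simp
    have hpar'u : par' u = s := by
      rw [hpar', Function.update_of_ne hwu_ne.symm, Function.update_self]
    have hpar'S : ∀ x ∈ S, par' x = par x := by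
      intro x hx
      rw [hpar', Function.update_of_ne (fun e : x = w => hwS (e ▸ hx)),
        Function.update_of_ne (fun e : x = u => huS (e ▸ hx))]
    have hh'w : h' w = M + 2 := by rw [hh']; simp
    have hh'u : h' u = M + 1 := by
      rw [hh', Function.update_of_ne hwu_ne.symm, Function.update_self]
    have hh'S : ∀ x ∈ S, h' x = h x := by
      intro x hx
      rw [hh', Function.update_of_ne (fun e : x = w => hwS (e ▸ hx)),
        Function.update_of_ne (fun e : x = u => huS (e ▸ hx))]
    -- apply induction hypothesis
    have hmeas : (Finset.univ \ S').card ≤ k := by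
      have hsub : Finset.univ \ S' ⊂ Finset.univ \ S := by
        refine Finset.ssubset_iff_of_subset
          (Finset.sdiff_subset_sdiff (le_refl _) ?_) |>.mpr ?_
        · intro x hx
          exact Finset.mem_insert_of_mem (Finset.mem_insert_of_mem hx)
        · refine ⟨w, Finset.mem_sdiff.mpr ⟨Finset.mem_univ w, hwS⟩, ?_⟩
          simp [hS']
      have := Finset.card_lt_card hsub
      omega
    refine ih S' I' r par' h' hmeas ?_ ?_ ?_ ?_ ?_
    · exact Finset.mem_insert_of_mem (Finset.mem_insert_of_mem hr)
    · intro x hx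
      rcases Finset.mem_insert.mp hx with rfl | hx'
      · exact Finset.mem_insert_of_mem (Finset.mem_insert_self _ _)
      · exact Finset.mem_insert_of_mem (Finset.mem_insert_of_mem (hIS hx'))
    · intro x hx y hy
      rcases Finset.mem_insert.mp hx with rfl | hx' <;>
        rcases Finset.mem_insert.mp hy with rfl | hy'
      · exact G.irrefl
      · exact hwN y (hIS hy')
      · exact fun hadj => hwN x (hIS hx') hadj.symm
      · exact hI x hx' y hy'
    · omega
    · intro x hx hxr
      rcases Finset.mem_insert.mp hx with rfl | hx'
      · -- x = u
        rw [hpar'u, hh'u, hh'S s hsS]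
        refine ⟨hus, Finset.mem_insert_of_mem (Finset.mem_insert_of_mem hsS), ?_⟩
        have : h s ≤ M := Finset.le_sup hsS
        omega
      rcases Finset.mem_insert.mp hx' with rfl | hx''
      · -- x = w
        rw [hpar'w, hh'w, hh'u]
        exact ⟨hwu, Finset.mem_insert_self _ _, by omega⟩
      · -- x ∈ S
        obtain ⟨ha1, ha2, ha3⟩ := hinv x hx'' hxr
        rw [hpar'S x hx'', hh'S x hx'', hh'S (par x) ha2]
        exact ⟨ha1, Finset.mem_insert_of_mem (Finset.mem_insert_of_mem ha2), ha3⟩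




lemma path_getVert_one_eq {G : SimpleGraph V} {u x : V} (q : G.Walk u x)
    (hq : q.IsPath) (hnil : ¬ q.Nil) (h1 : q.getVert 1 = x) : q.length = 1 := by
  cases q with
  | nil => simp [Walk.nil_iff_length_eq] at hnil
  | @cons _ b _ hadj q' =>
    rw [Walk.getVert_cons_succ, Walk.getVert_zero] at h1
    subst h1
    rw [Walk.cons_isPath_iff] at hq
    rw [(Walk.isPath_iff_eq_nil (p := q')).mp hq.1]
    simp

lemma getVert_one_mem_support {G : SimpleGraph V} {u x : V} (q : G.Walk u x) :
    q.getVert 1 ∈ q.support := by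
  cases q with
  | nil => simp [Walk.getVert]
  | @cons _ b _ hadj q' =>
    rw [Walk.getVert_cons_succ, Walk.getVert_zero, Walk.support_cons]
    exact List.mem_cons_of_mem _ q'.start_mem_support

lemma build {G : SimpleGraph V} (S : Finset V) (r : V) (hr : r ∈ S)
    (p2 : V → V) (h2 : V → ℕ)
    (key : ∀ v : V, v ≠ r → G.Adj v (p2 v) ∧ p2 v ∈ S ∧ h2 (p2 v) < h2 v) :
    ∃ T : SimpleGraph V, T ≤ G ∧ T.IsTree ∧
      (T.induce (S : Set V)).Connected ∧
      ∀ v ∉ S, (T.neighborSet v).ncard = 1 ∧ ∀ u, T.Adj v u → u ∈ S := by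
  classical
  set T : SimpleGraph V := SimpleGraph.fromRel (fun x y => x ≠ r ∧ p2 x = y) with hTdef
  have hTadj : ∀ x y : V, T.Adj x y ↔ x ≠ y ∧ ((x ≠ r ∧ p2 x = y) ∨ (y ≠ r ∧ p2 y = x)) :=
    fun x y => SimpleGraph.fromRel_adj _ x y
  have hTG : T ≤ G := by
    intro x y hxy
    rw [hTadj] at hxy
    rcases hxy with ⟨hne, ⟨hx, hp⟩ | ⟨hy, hp⟩⟩
    · exact hp ▸ (key x hx).1
    · exact (hp ▸ (key y hy).1).symm
  have hadj_par : ∀ v : V, v ≠ r → T.Adj v (p2 v) := fun v hv =>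
    (hTadj _ _).mpr ⟨((key v hv).1).ne, Or.inl ⟨hv, rfl⟩⟩
  -- reachability to the root
  have reach : ∀ (n : ℕ) (v : V), h2 v ≤ n → T.Reachable v r := by
    intro n
    induction n with
    | zero =>
      intro v hv
      by_cases hvr : v = r
      · subst hvr; exact Reachable.refl _
      · have := (key v hvr).2.2; omega
    | succ n ih =>
      intro v hv
      by_cases hvr : v = r
      · subst hvr; exact Reachable.refl _
      · exact ((hadj_par v hvr).reachable).trans
          (ih (p2 v) (by have := (key v hvr).2.2; omega))
  have hpre : T.Preconnected := fun x y =>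
    (reach (h2 x) x le_rfl).trans (reach (h2 y) y le_rfl).symm
  have hconn : T.Connected := (SimpleGraph.connected_iff T).mpr ⟨hpre, ⟨r⟩⟩
  -- maximality helper
  have hmax : ∀ u z : V, T.Adj u z → h2 z ≤ h2 u → u ≠ r ∧ p2 u = z := by
    intro u z hadj hle
    rw [hTadj] at hadj
    rcases hadj with ⟨hne, h1 | h2'⟩
    · exact h1
    · exfalso
      have := (key z h2'.1).2.2
      rw [h2'.2] at this
      omega
  -- acyclicity
  have hacyc : T.IsAcyclic := by
    intro v c hc
    obtain ⟨u, humem, humax⟩ := Finset.exists_max_image c.support.toFinset h2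
      ⟨v, List.mem_toFinset.mpr c.start_mem_support⟩
    rw [List.mem_toFinset] at humem
    have hc' := hc.rotate humem
    have hsup : ∀ z ∈ (c.rotate u humem).support, h2 z ≤ h2 u := by
      intro z hz
      rw [Walk.support_eq_cons] at hz
      rcases List.mem_cons.mp hz with rfl | hz'
      · exact le_rfl
      · have hperm := Walk.support_rotate c u humem
        have hz2 : z ∈ c.support.tail := hperm.mem_iff.mp hz'
        exact humax z (List.mem_toFinset.mpr (List.mem_of_mem_tail hz2))
    revert hc' hsup
    generalize c.rotate u humem = c2
    intro hc' hsup
    cases c2 with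
    | nil => exact Walk.IsCycle.not_of_nil hc'
    | @cons _ b _ hadj p =>
      have hbmem : b ∈ (Walk.cons hadj p).support := by
        rw [Walk.support_cons]
        exact List.mem_cons_of_mem _ p.start_mem_support
      have hx : u ≠ r ∧ p2 u = b := hmax u b hadj (hsup b hbmem)
      have hlen3 := hc'.three_le_length
      rw [Walk.length_cons] at hlen3
      have hppath : p.IsPath := ((Walk.cons_isCycle_iff p hadj).mp hc').1
      have hqnil : ¬ p.reverse.Nil := by
        rw [Walk.not_nil_iff_lt_length, Walk.length_reverse]; omega
      have hyadj : T.Adj u (p.reverse.getVert 1) := Walk.adj_snd hqnil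
      have hymem : p.reverse.getVert 1 ∈ (Walk.cons hadj p).support := by
        have h1 : p.reverse.getVert 1 ∈ p.reverse.support := getVert_one_mem_support _
        rw [Walk.support_reverse, List.mem_reverse] at h1
        rw [Walk.support_cons]
        exact List.mem_cons_of_mem _ h1
      have hy : u ≠ r ∧ p2 u = p.reverse.getVert 1 := hmax u _ hyadj (hsup _ hymem)
      have hyx : p.reverse.getVert 1 = b := by rw [← hy.2, hx.2]
      have hlen1 := path_getVert_one_eq p.reverse hppath.reverse hqnil hyx
      rw [Walk.length_reverse] at hlen1
      omega
  -- induced connectivity on S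
  have reachS : ∀ (n : ℕ) (x : V) (hx : x ∈ (S : Set V)),
      h2 x ≤ n → (T.induce (S : Set V)).Reachable ⟨x, hx⟩ ⟨r, by simpa using hr⟩ := by
    intro n
    induction n with
    | zero =>
      intro x hx hxn
      by_cases hxr : x = r
      · subst hxr; exact Reachable.refl _
      · have := (key x hxr).2.2; omega
    | succ n ih =>
      intro x hx hxn
      by_cases hxr : x = r
      · subst hxr; exact Reachable.refl _
      · have hpx : p2 x ∈ (S : Set V) := by simpa using (key x hxr).2.1
        have hadj' : (T.induce (S : Set V)).Adj ⟨x, hx⟩ ⟨p2 x, hpx⟩ :=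
          SimpleGraph.comap_adj.mpr (hadj_par x hxr)
        exact hadj'.reachable.trans (ih (p2 x) hpx (by have := (key x hxr).2.2; omega))
  have hSconn : (T.induce (S : Set V)).Connected := by
    rw [SimpleGraph.connected_iff]
    refine ⟨fun x y => ?_, ⟨⟨r, by simpa using hr⟩⟩⟩
    obtain ⟨x, hx⟩ := x
    obtain ⟨y, hy⟩ := y
    exact (reachS (h2 x) x hx le_rfl).trans (reachS (h2 y) y hy le_rfl).symm
  refine ⟨T, hTG, ⟨hconn, hacyc⟩, hSconn, ?_⟩
  intro v hv
  have hvr : v ≠ r := fun e => hv (e ▸ hr)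
  have h1 : ∀ u, T.Adj v u → u = p2 v := by
    intro u hu
    rw [hTadj] at hu
    rcases hu with ⟨hne, ⟨_, hp⟩ | ⟨hur, hp⟩⟩
    · exact hp.symm
    · exact absurd (hp ▸ (key u hur).2.1) hv
  constructor
  · have hset : T.neighborSet v = {p2 v} := by
      apply Set.eq_singleton_iff_unique_mem.mpr
      exact ⟨hadj_par v hvr, fun u hu => h1 u hu⟩
    rw [hset]
    exact Set.ncard_singleton _
  · intro u hu
    rw [h1 u hu]
    exact (key v hvr).2.1


end Stmt6Aux

/-- The Wiener index: sum of distances over unordered pairs (as a rational). -/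
noncomputable def wiener {V : Type*} [Fintype V] (G : SimpleGraph V) : ℚ :=
  (∑ u : V, ∑ v : V, (G.dist u v : ℚ)) / 2

/-- The average distance `μ(G) = W(G) / C(n,2)`. -/
noncomputable def avgDist {V : Type*} [Fintype V] (G : SimpleGraph V) : ℚ :=
  wiener G / ((Fintype.card V).choose 2 : ℚ)

/-- `a` is the independence number of `G`. -/
def IsIndepNum {V : Type*} (G : SimpleGraph V) (a : ℕ) : Prop :=
  IsGreatest {m | ∃ s : Finset V, s.card = m ∧ ∀ x ∈ s, ∀ y ∈ s, ¬ G.Adj x y} a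

/-- The tree `H_{a,b}`: a path on `a` vertices with `⌊b/2⌋` pendent vertices attached to
one end and `⌈b/2⌉` pendent vertices attached to the other end. -/
def Hab (a b : ℕ) : SimpleGraph (Fin (a + b)) :=
  SimpleGraph.fromRel (fun i j =>
    ((i : ℕ) + 1 = (j : ℕ) ∧ (j : ℕ) < a) ∨
    (a ≤ (i : ℕ) ∧ (i : ℕ) < a + b / 2 ∧ (j : ℕ) = 0) ∨
    (a + b / 2 ≤ (i : ℕ) ∧ (j : ℕ) = a - 1))

/-- a connected graph of order `n ≥ 2α` has a spanning tree obtained from a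
subtree of order `t ≤ 2α - 1` by attaching the remaining vertices as pendent vertices. -/
theorem stmt6 {V : Type*} [Fintype V] (G : SimpleGraph V) (n a : ℕ)
    (hn : Fintype.card V = n) (hG : G.Connected) (ha : IsIndepNum G a) (h : 2 * a ≤ n) :
    ∃ T : SimpleGraph V, T ≤ G ∧ T.IsTree ∧
      ∃ (t : ℕ) (S : Finset V), t ≤ 2 * a - 1 ∧ S.card = t ∧
        (T.induce (S : Set V)).Connected ∧
        ∀ v ∉ S, (T.neighborSet v).ncard = 1 ∧ ∀ u, T.Adj v u → u ∈ S := by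
  classical
  obtain ⟨r⟩ := hG.nonempty
  obtain ⟨S, I, par, h0, hrS, hIS, hI, hcard, hinv, hdom⟩ :=
    Stmt6Aux.grow hG ((Finset.univ \ {r}).card) {r} {r} r id (fun _ => 0) le_rfl
      (Finset.mem_singleton_self r) (le_refl _)
      (by
        intro x hx y hy
        rw [Finset.mem_singleton] at hx hy
        subst hx; subst hy
        exact G.irrefl)
      (by simp)
      (by
        intro v hv hvr
        rw [Finset.mem_singleton] at hv
        exact absurd hv hvr)
  have hIa : I.card ≤ a := ha.2 ⟨I, rfl, hI⟩
  have hdom' : ∀ v : V, ∃ u : V, v ∉ S → u ∈ S ∧ G.Adj v u := by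
    intro v
    by_cases hv : v ∈ S
    · exact ⟨r, fun hc => absurd hv hc⟩
    · obtain ⟨u, hu1, hu2⟩ := hdom v hv
      exact ⟨u, fun _ => ⟨hu1, hu2⟩⟩
  choose f hf using hdom'
  obtain ⟨T, hTG, hTree, hSconn, hleaf⟩ :=
    Stmt6Aux.build S r hrS (fun v => if v ∈ S then par v else f v)
      (fun v => if v ∈ S then h0 v else S.sup h0 + 1)
      (by
        intro v hv
        by_cases hvS : v ∈ S
        · obtain ⟨ha1, ha2, ha3⟩ := hinv v hvS hv
          simp only [if_pos hvS, if_pos ha2]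
          exact ⟨ha1, ha2, ha3⟩
        · obtain ⟨hfS, hfadj⟩ := hf v hvS
          simp only [if_neg hvS, if_pos hfS]
          exact ⟨hfadj, hfS, lt_of_le_of_lt (Finset.le_sup hfS) (Nat.lt_succ_self _)⟩)
  have hSpos : 1 ≤ S.card := Finset.card_pos.mpr ⟨r, hrS⟩
  refine ⟨T, hTG, hTree, S.card, S, by omega, rfl, hSconn, hleaf⟩
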